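/- Let Γ be a finite simple graph, let (G_v) be a family of nontrivial groups indexed by the vertices of Γ, and let 𝒢 = 𝒢(Γ, {G_v}) be the associated graph product. Let N be a normal subgroup of 𝒢 and let H = ⋂_{v a vertex of Γ} N · 𝒢(lk(v)), where N · 𝒢(lk(v)) denotes the subgroup generated by N together with 𝒢(lk(v)). Then for every h ∈ H and every g ∈ 𝒢, the commutator [h,g] lies in N; that is, the image of H in 𝒢/N is contained in the center of 𝒢/N. -/

import Mathlib

/-- The set of defining relators of the graph product: commutators of elements of
vertex groups attached to adjacent vertices. -/
def graphProductRels {V : Type} (Γ : SimpleGraph V) (G : V → Type)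
    [∀ v, Group (G v)] : Subgroup (Monoid.CoprodI G) :=
  Subgroup.normalClosure
    { x | ∃ (v w : V) (g : G v) (h : G w), Γ.Adj v w ∧
        x = Monoid.CoprodI.of g * Monoid.CoprodI.of h *
              (Monoid.CoprodI.of g)⁻¹ * (Monoid.CoprodI.of h)⁻¹ }

instance graphProductRels.normal {V : Type} (Γ : SimpleGraph V) (G : V → Type)
    [∀ v, Group (G v)] : (graphProductRels Γ G).Normal :=
  Subgroup.normalClosure_normal

/-- The graph product of the groups `G v` over the simple graph `Γ`. -/
abbrev GraphProduct {V : Type} (Γ : SimpleGraph V) (G : V → Type)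
    [∀ v, Group (G v)] : Type :=
  Monoid.CoprodI G ⧸ graphProductRels Γ G

/-- The subgroup `𝒢(Δ)` of the graph product generated by the images of the vertex
groups attached to the vertices in the set `S`. -/
def vertexSubgroup {V : Type} (Γ : SimpleGraph V) (G : V → Type)
    [∀ v, Group (G v)] (S : Set V) : Subgroup (GraphProduct Γ G) :=
  Subgroup.closure
    { x | ∃ v ∈ S, ∃ g : G v,
        x = (QuotientGroup.mk (Monoid.CoprodI.of g) : GraphProduct Γ G) }

theorem image_of_inf_N_join_links_is_central
    {V : Type} [Fintype V] (Γ : SimpleGraph V) (G : V → Type)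
    [∀ v, Group (G v)] [∀ v, Nontrivial (G v)]
    (N : Subgroup (GraphProduct Γ G)) [N.Normal] :
    ∀ h ∈ ⨅ v : V, (N ⊔ vertexSubgroup Γ G (Γ.neighborSet v)),
      ∀ g : GraphProduct Γ G, h * g * h⁻¹ * g⁻¹ ∈ N := by
  intro h hh g
  -- Key step: commutator of h with any vertex generator lies in N.
  have key : ∀ (v : V) (a : G v),
      h * (QuotientGroup.mk (Monoid.CoprodI.of a) : GraphProduct Γ G) * h⁻¹ *
        (QuotientGroup.mk (Monoid.CoprodI.of a) : GraphProduct Γ G)⁻¹ ∈ N := by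
    intro v a
    set A : GraphProduct Γ G := QuotientGroup.mk (Monoid.CoprodI.of a) with hA
    -- the link subgroup centralizes A
    have hcent : vertexSubgroup Γ G (Γ.neighborSet v) ≤ Subgroup.centralizer {A} := by
      rw [vertexSubgroup, Subgroup.closure_le]
      rintro x ⟨w, hw, b, rfl⟩
      rw [SetLike.mem_coe, Subgroup.mem_centralizer_iff]
      rintro y ⟨rfl⟩
      have hrel : Monoid.CoprodI.of a * Monoid.CoprodI.of b *
          (Monoid.CoprodI.of a)⁻¹ * (Monoid.CoprodI.of b)⁻¹ ∈ graphProductRels Γ G :=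
        Subgroup.subset_normalClosure ⟨v, w, a, b, hw, rfl⟩
      have h1 : (QuotientGroup.mk (Monoid.CoprodI.of a * Monoid.CoprodI.of b *
          (Monoid.CoprodI.of a)⁻¹ * (Monoid.CoprodI.of b)⁻¹) : GraphProduct Γ G) = 1 :=
        (QuotientGroup.eq_one_iff _).mpr hrel
      have h2 : @Bracket.bracket (GraphProduct Γ G) (GraphProduct Γ G) commutatorElement A (QuotientGroup.mk (Monoid.CoprodI.of b)) = 1 := by
        simpa [commutatorElement_def, hA, QuotientGroup.mk_mul, QuotientGroup.mk_inv]
          using h1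
      exact commutatorElement_eq_one_iff_mul_comm.mp h2
    -- decompose h as n * k
    have hh' : h ∈ N ⊔ vertexSubgroup Γ G (Γ.neighborSet v) :=
      (Subgroup.mem_iInf.mp hh) v
    have hh'' : h ∈ (↑(N ⊔ vertexSubgroup Γ G (Γ.neighborSet v)) : Set _) := hh'
    rw [Subgroup.normal_mul] at hh''
    obtain ⟨n, hn, k, hk, rfl⟩ := hh''
    have hcomm : A * k = k * A :=
      Subgroup.mem_centralizer_iff.mp (hcent hk) A rfl
    have : n * k * A * (n * k)⁻¹ * A⁻¹ = n * (A * n⁻¹ * A⁻¹) := by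
      have : k * A * k⁻¹ = A := by
        rw [← hcomm]; group
      calc n * k * A * (n * k)⁻¹ * A⁻¹ = n * (k * A * k⁻¹) * n⁻¹ * A⁻¹ := by group
        _ = n * A * n⁻¹ * A⁻¹ := by rw [this]
        _ = n * (A * n⁻¹ * A⁻¹) := by group
    rw [this]
    exact N.mul_mem hn (Subgroup.Normal.conj_mem ‹N.Normal› _ (N.inv_mem hn) A)
  -- The set of g commuting with h modulo N is a subgroup
  let K : Subgroup (GraphProduct Γ G) :=
  { carrier := {g | h * g * h⁻¹ * g⁻¹ ∈ N}
    one_mem' := by simpa using N.one_mem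
    mul_mem' := by
      intro a b ha hb
      have heq : h * (a * b) * h⁻¹ * (a * b)⁻¹ =
          (h * a * h⁻¹ * a⁻¹) * (a * (h * b * h⁻¹ * b⁻¹) * a⁻¹) := by group
      simp only [Set.mem_setOf_eq] at *
      rw [heq]
      exact N.mul_mem ha (Subgroup.Normal.conj_mem ‹N.Normal› _ hb a)
    inv_mem' := by
      intro a ha
      simp only [Set.mem_setOf_eq] at *
      have heq : h * a⁻¹ * h⁻¹ * a⁻¹⁻¹ = a⁻¹ * (h * a * h⁻¹ * a⁻¹)⁻¹ * a⁻¹⁻¹ := by group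
      rw [heq]
      exact Subgroup.Normal.conj_mem ‹N.Normal› _ (N.inv_mem ha) a⁻¹ }
  suffices hK : g ∈ K from hK
  obtain ⟨x, rfl⟩ := QuotientGroup.mk_surjective g
  induction x using Monoid.CoprodI.induction_on with
  | one => exact K.one_mem
  | of v a => exact key v a
  | mul x y hx hy =>
    rw [QuotientGroup.mk_mul]
    exact K.mul_mem hx hy
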